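/- Under the update sequence where the minimum-opinion agent always updates, the minimum opinion after one step satisfies x_{μ(x(t))}(t+1) ≥ x_{μ(x(0))}(0) + (1/k)·(y(0) − x_{μ(x(0))}(0)), where y(0) = max_{i ∈ N_{μ(x(0))}} x_i(0). -/

import Mathlib

open scoped Classical
open Finset

noncomputable def nearList {n : ℕ} (x : Fin n → ℝ) (i : Fin n) : List (Fin n) :=
  @List.insertionSort (Fin n)
    (fun j j' => |x j - x i| < |x j' - x i| ∨ (|x j - x i| = |x j' - x i| ∧ j ≤ j'))
    (Classical.decRel _) (List.finRange n)

/-- The set of the `k` agents nearest to `i` in opinion distance (ties broken by lower index). -/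
noncomputable def nbr {n : ℕ} (k : ℕ) (x : Fin n → ℝ) (i : Fin n) : Finset (Fin n) :=
  ((nearList x i).take k).toFinset

/-- The asynchronous update `f(x,i)`. -/
noncomputable def upd {n : ℕ} (k : ℕ) (x : Fin n → ℝ) (i : Fin n) : Fin n → ℝ :=
  Function.update x i ((∑ j ∈ nbr k x i, x j) / k)

/-- A configuration is clustered if all neighbors of every agent share its opinion. -/
def Clustered {n : ℕ} (k : ℕ) (x : Fin n → ℝ) : Prop :=
  ∀ i : Fin n, ∀ j ∈ nbr k x i, x j = x i

/-- `μ(x)`: lowest index attaining the minimum. -/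
noncomputable def argminIdx {n : ℕ} [NeZero n] (x : Fin n → ℝ) : Fin n :=
  (Finset.univ.filter fun i => ∀ j, x i ≤ x j).min' (by
    obtain ⟨i, -, hi⟩ := Finset.exists_min_image Finset.univ x Finset.univ_nonempty
    exact ⟨i, Finset.mem_filter.mpr ⟨Finset.mem_univ _, fun j => hi j (Finset.mem_univ j)⟩⟩)

/-- `M(x)`: lowest index attaining the maximum. -/
noncomputable def argmaxIdx {n : ℕ} [NeZero n] (x : Fin n → ℝ) : Fin n :=
  argminIdx (fun i => -x i)

/-- Trajectory of the dynamics with (possibly state-dependent) update selector `σ`. -/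
noncomputable def traj {n : ℕ} (k : ℕ) (σ : ℕ → (Fin n → ℝ) → Fin n) (x0 : Fin n → ℝ) :
    ℕ → Fin n → ℝ
  | 0 => x0
  | t + 1 => upd k (traj k σ x0 t) (σ t (traj k σ x0 t))


section Aux

variable {n k : ℕ}

/-- The sorting relation used in `nearList`. -/
def nrel {n : ℕ} (x : Fin n → ℝ) (i : Fin n) : Fin n → Fin n → Prop :=
  fun j j' => |x j - x i| < |x j' - x i| ∨ (|x j - x i| = |x j' - x i| ∧ j ≤ j')

lemma nrel_total (x : Fin n → ℝ) (i : Fin n) : IsTotal (Fin n) (nrel x i) := by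
  constructor
  intro a b
  rcases lt_trichotomy (|x a - x i|) (|x b - x i|) with h | h | h
  · exact Or.inl (Or.inl h)
  · rcases le_total a b with hab | hab
    · exact Or.inl (Or.inr ⟨h, hab⟩)
    · exact Or.inr (Or.inr ⟨h.symm, hab⟩)
  · exact Or.inr (Or.inl h)

lemma nrel_trans (x : Fin n → ℝ) (i : Fin n) : IsTrans (Fin n) (nrel x i) := by
  constructor
  rintro a b c (hab | ⟨hab, hab'⟩) (hbc | ⟨hbc, hbc'⟩)
  · exact Or.inl (hab.trans hbc)
  · exact Or.inl (hbc ▸ hab)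
  · exact Or.inl (hab ▸ hbc)
  · exact Or.inr ⟨hab.trans hbc, hab'.trans hbc'⟩

lemma nearList_perm (x : Fin n → ℝ) (i : Fin n) : (nearList x i).Perm (List.finRange n) :=
  @List.perm_insertionSort (Fin n) _ (Classical.decRel _) (List.finRange n)

lemma nearList_nodup (x : Fin n → ℝ) (i : Fin n) : (nearList x i).Nodup :=
  (nearList_perm x i).nodup_iff.mpr (List.nodup_finRange n)

lemma nearList_length (x : Fin n → ℝ) (i : Fin n) : (nearList x i).length = n := by
  rw [(nearList_perm x i).length_eq, List.length_finRange]

lemma nearList_sorted (x : Fin n → ℝ) (i : Fin n) :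
    (nearList x i).Pairwise (nrel x i) := by
  haveI := nrel_total x i
  haveI := nrel_trans x i
  exact @List.pairwise_insertionSort (Fin n) (nrel x i) (Classical.decRel _)
    (nrel_total x i) (nrel_trans x i) (List.finRange n)

lemma mem_nbr {x : Fin n → ℝ} {i j : Fin n} :
    j ∈ nbr k x i ↔ j ∈ (nearList x i).take k := by
  simp [nbr]

lemma nbr_card (hkn : k ≤ n) (x : Fin n → ℝ) (i : Fin n) : (nbr k x i).card = k := by
  rw [nbr, List.toFinset_card_of_nodup ((nearList_nodup x i).sublist (List.take_sublist _ _)),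
    List.length_take, nearList_length, min_eq_left hkn]

lemma argminIdx_le [NeZero n] (x : Fin n → ℝ) (j : Fin n) : x (argminIdx x) ≤ x j := by
  have h : argminIdx x ∈ Finset.univ.filter fun i => ∀ j, x i ≤ x j :=
    Finset.min'_mem _ _
  exact (Finset.mem_filter.mp h).2 j

/-- Any agent outside the neighborhood of the minimum has opinion at least that of
any agent inside it. -/
lemma outside_ge [NeZero n] {x : Fin n → ℝ} {j j' : Fin n}
    (hj : j ∉ nbr k x (argminIdx x)) (hj' : j' ∈ nbr k x (argminIdx x)) :
    x j' ≤ x j := by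
  set i := argminIdx x with hi
  have hmem : j ∈ nearList x i := (nearList_perm x i).mem_iff.mpr (List.mem_finRange j)
  have hjd : j ∈ (nearList x i).drop k := by
    have h2 : j ∈ (nearList x i).take k ++ (nearList x i).drop k := by
      rw [List.take_append_drop]; exact hmem
    rcases List.mem_append.mp h2 with h | h
    · exact absurd (mem_nbr.mpr h) hj
    · exact h
  have hs : List.Pairwise (nrel x i) ((nearList x i).take k ++ (nearList x i).drop k) := by
    rw [List.take_append_drop]; exact nearList_sorted x i
  have hr : nrel x i j' j := (List.pairwise_append.mp hs).2.2 j' (mem_nbr.mp hj') j hjd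
  have h1 : |x j - x i| = x j - x i := abs_of_nonneg (sub_nonneg.mpr (argminIdx_le x j))
  have h1' : |x j' - x i| = x j' - x i := abs_of_nonneg (sub_nonneg.mpr (argminIdx_le x j'))
  rcases hr with h | ⟨h, -⟩
  · rw [h1, h1'] at h; linarith
  · rw [h1, h1'] at h; linarith

/-- Key sum bound: if all opinions are at least `m` and fewer than `k` agents have
opinion below `y0`, then the sum over the neighborhood of the minimum is at least
`(k-1)·m + y0`. -/
lemma sum_bound [NeZero n] (hk : 1 ≤ k) (hkn : k ≤ n) (m y0 : ℝ) (x : Fin n → ℝ)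
    (hlb : ∀ j, m ≤ x j)
    (hcard : (Finset.univ.filter fun j => x j < y0).card < k) :
    ((k : ℝ) - 1) * m + y0 ≤ ∑ j ∈ nbr k x (argminIdx x), x j := by
  have hN : (nbr k x (argminIdx x)).card = k := nbr_card hkn _ _
  obtain ⟨j, hjN, hjy⟩ : ∃ j ∈ nbr k x (argminIdx x), ¬ x j < y0 := by
    by_contra h
    push_neg at h
    have hsub : nbr k x (argminIdx x) ⊆ Finset.univ.filter fun j => x j < y0 :=
      fun j hj => Finset.mem_filter.mpr ⟨Finset.mem_univ _, h j hj⟩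
    have := Finset.card_le_card hsub
    omega
  push_neg at hjy
  rw [← Finset.add_sum_erase _ _ hjN]
  have hc : ((nbr k x (argminIdx x)).erase j).card = k - 1 := by
    rw [Finset.card_erase_of_mem hjN, hN]
  have h1 : ((k : ℝ) - 1) * m ≤ ∑ j' ∈ (nbr k x (argminIdx x)).erase j, x j' := by
    have h2 : ((nbr k x (argminIdx x)).erase j).card • m ≤
        ∑ j' ∈ (nbr k x (argminIdx x)).erase j, x j' :=
      Finset.card_nsmul_le_sum _ _ _ fun j' _ => hlb j'
    rw [hc, nsmul_eq_mul, Nat.cast_sub hk, Nat.cast_one] at h2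
    exact h2
  linarith

end Aux

/-- when the minimum-opinion agent always updates, after each update the new
opinion of the updating agent is at least `m + (1/k)(y(0) - m)` where `m = x_{μ(x(0))}(0)`. -/
theorem min_update_lower_bound {n k : ℕ} [NeZero n] (hk : 1 ≤ k) (hkn : k ≤ n)
    (x0 : Fin n → ℝ) (X : ℕ → Fin n → ℝ)
    (hX : X = traj k (fun _ x => argminIdx x) x0)
    (y0 : ℝ) (hy0 : y0 = sSup (x0 '' (nbr k x0 (argminIdx x0) : Set (Fin n)))) :
    ∀ t : ℕ, x0 (argminIdx x0) + (1 / (k : ℝ)) * (y0 - x0 (argminIdx x0)) ≤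
      X (t + 1) (argminIdx (X t)) := by
  
  intro t
  set i0 := argminIdx x0 with hi0
  set m := x0 i0 with hm
  -- facts about y0
  have hNcard : (nbr k x0 i0).card = k := nbr_card hkn _ _
  have hNne : (nbr k x0 i0).Nonempty := Finset.card_pos.mp (by omega)
  have himg : x0 '' (nbr k x0 i0 : Set (Fin n)) = ((nbr k x0 i0).image x0 : Finset ℝ) := by
    simp [Finset.coe_image]
  have hTne : ((nbr k x0 i0).image x0).Nonempty := hNne.image x0
  have hy0' : y0 = ((nbr k x0 i0).image x0).max' hTne := by
    rw [hy0, himg, hTne.csSup_eq_max']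
  obtain ⟨jstar, hjstarN, hjstar⟩ : ∃ j ∈ nbr k x0 i0, x0 j = y0 := by
    have := ((nbr k x0 i0).image x0).max'_mem hTne
    rw [← hy0'] at this
    exact Finset.mem_image.mp this
  have hmy0 : m ≤ y0 := hjstar ▸ argminIdx_le x0 jstar
  have hkpos : (0 : ℝ) < k := by positivity
  -- one step of the dynamics
  have hstep : ∀ s, X (s + 1) = upd k (X s) (argminIdx (X s)) := by
    intro s; rw [hX]; rfl
  have hval : ∀ s, X (s + 1) (argminIdx (X s)) =
      (∑ j ∈ nbr k (X s) (argminIdx (X s)), X s j) / k := by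
    intro s; rw [hstep s]; simp [upd]
  -- invariant
  have hinv : ∀ s, (∀ j, m ≤ X s j) ∧
      (Finset.univ.filter fun j => X s j < y0).card < k := by
    intro s
    induction s with
    | zero =>
      refine ⟨by rw [hX]; exact fun j => argminIdx_le x0 j, ?_⟩
      rw [hX]
      show (Finset.univ.filter fun j => x0 j < y0).card < k
      have hsub : (Finset.univ.filter fun j => x0 j < y0) ⊆ (nbr k x0 i0).erase jstar := by
        intro j hj
        have hjlt : x0 j < y0 := (Finset.mem_filter.mp hj).2
        have hjN : j ∈ nbr k x0 i0 := by
          by_contra hjn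
          exact absurd (hjstar ▸ outside_ge hjn hjstarN) (not_le.mpr hjlt)
        exact Finset.mem_erase.mpr ⟨fun h => by rw [h, hjstar] at hjlt; linarith, hjN⟩
      have := Finset.card_le_card hsub
      rw [Finset.card_erase_of_mem hjstarN, hNcard] at this
      omega
    | succ s ih =>
      obtain ⟨hlb, hcard⟩ := ih
      have hsum := sum_bound hk hkn m y0 (X s) hlb hcard
      have hvs := hval s
      have hnewlb : m ≤ X (s + 1) (argminIdx (X s)) := by
        rw [hvs, le_div_iff₀ hkpos]
        nlinarith
      constructor
      · intro j
        by_cases hji : j = argminIdx (X s)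
        · rw [hji]; exact hnewlb
        · rw [hstep s]; rw [show upd k (X s) (argminIdx (X s)) j = X s j from
            Function.update_of_ne hji _ _]
          exact hlb j
      · have hsub : (Finset.univ.filter fun j => X (s+1) j < y0) ⊆
            (Finset.univ.filter fun j => X s j < y0) := by
          intro j hj
          have hjlt : X (s+1) j < y0 := (Finset.mem_filter.mp hj).2
          refine Finset.mem_filter.mpr ⟨Finset.mem_univ _, ?_⟩
          by_cases hji : j = argminIdx (X s)
          · -- show X s (argminIdx (X s)) < y0
            by_contra hge
            push_neg at hge
            rw [hji] at hjlt hge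
            have hall : ∀ j', y0 ≤ X s j' := fun j' => le_trans hge (argminIdx_le (X s) j')
            have hsum2 : (nbr k (X s) (argminIdx (X s))).card • y0 ≤
                ∑ j' ∈ nbr k (X s) (argminIdx (X s)), X s j' :=
              Finset.card_nsmul_le_sum _ _ _ fun j' _ => hall j'
            rw [nbr_card hkn, nsmul_eq_mul] at hsum2
            have : y0 ≤ X (s+1) (argminIdx (X s)) := by
              rw [hvs, le_div_iff₀ hkpos]
              linarith [hsum2]
            linarith
          · rw [hstep s] at hjlt
            rwa [show upd k (X s) (argminIdx (X s)) j = X s j from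
              Function.update_of_ne hji _ _] at hjlt
        have := Finset.card_le_card hsub
        omega
  -- conclude
  obtain ⟨hlb, hcard⟩ := hinv t
  have hsum := sum_bound hk hkn m y0 (X t) hlb hcard
  rw [hval t, le_div_iff₀ hkpos]
  have hexp : (m + 1 / (k:ℝ) * (y0 - m)) * k = ((k:ℝ) - 1) * m + y0 := by
    field_simp
    ring
  rw [hexp]
  exact hsum
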